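/- Let γ : [0,1] → ℝ² be an injective, continuously differentiable curve with γ′(u) ≠ 0 for all u ∈ [0,1]. Let O ⊆ γ([0,1]) be a set every point of which is an accumulation point of O, and let F : ℝ² → ℝ² be a map that is differentiable at every point of O and satisfies F(O) ⊆ O. Then for every t ∈ [0,1] with γ(t) ∈ O and every u ∈ [0,1] with γ(u) = F(γ(t)), there exists c ∈ ℝ such that DF(γ(t))(γ′(t)) = c·γ′(u). -/

import Mathlib

noncomputable section

/-- The plane with the Euclidean norm. -/
abbrev E2 : Type := EuclideanSpace ℝ (Fin 2)

open Filter Topology Asymptotics Bornology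

lemma param_tendsto (γ : ℝ → E2) (hγinj : Set.InjOn γ (Set.Icc 0 1))
    (hγc : ContinuousOn γ (Set.Icc 0 1))
    (s : ℕ → ℝ) (hs : ∀ n, s n ∈ Set.Icc (0:ℝ) 1)
    {t : ℝ} (ht : t ∈ Set.Icc (0:ℝ) 1)
    (h : Tendsto (fun n => γ (s n)) atTop (𝓝 (γ t))) :
    Tendsto s atTop (𝓝 t) := by
  apply tendsto_of_subseq_tendsto
  intro ns hns
  obtain ⟨a, ha, ms, hms, hms'⟩ :=
    (isCompact_Icc (a := (0:ℝ)) (b := 1)).tendsto_subseq (fun n => hs (ns n))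
  refine ⟨ms, ?_⟩
  have h1 : Tendsto (fun n => s (ns (ms n))) atTop (𝓝[Set.Icc 0 1] a) := by
    refine tendsto_nhdsWithin_of_tendsto_nhds_of_eventually_within _ hms' ?_
    exact Eventually.of_forall fun n => hs _
  have h2 : Tendsto (fun n => γ (s (ns (ms n)))) atTop (𝓝 (γ a)) :=
    (hγc a ha).tendsto.comp h1
  have h3 : Tendsto (fun n => γ (s (ns (ms n)))) atTop (𝓝 (γ t)) :=
    h.comp (hns.comp hms.tendsto_atTop)
  have : a = t := hγinj ha ht (tendsto_nhds_unique h2 h3)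
  exact this ▸ hms'


/-- The key step of Theorem 4.5 of the paper: if an injective, regular `C¹` curve
`γ : [0,1] → ℝ²` contains a set `O` without isolated points that is invariant under a
map `F` differentiable on `O`, then the field of tangent lines of `γ` along `O` is
invariant: `DF(γ(t))(γ′(t))` is a scalar multiple of `γ′(u)` whenever
`γ(t) ∈ O` and `γ(u) = F(γ(t))`. Here `γ′` is `derivWithin γ (Set.Icc 0 1)`. -/
theorem tangent_line_field_invariant
    (γ : ℝ → E2)
    (hγinj : Set.InjOn γ (Set.Icc 0 1))
    (hγC1 : ContDiffOn ℝ 1 γ (Set.Icc 0 1))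
    (hγreg : ∀ u ∈ Set.Icc (0 : ℝ) 1, derivWithin γ (Set.Icc 0 1) u ≠ 0)
    (O : Set E2) (hO : O ⊆ γ '' Set.Icc 0 1)
    (hacc : ∀ p ∈ O, p ∈ closure (O \ {p}))
    (F : E2 → E2)
    (hFdiff : ∀ p ∈ O, DifferentiableAt ℝ F p)
    (hFO : F '' O ⊆ O) :
    ∀ t ∈ Set.Icc (0 : ℝ) 1, γ t ∈ O →
      ∀ u ∈ Set.Icc (0 : ℝ) 1, γ u = F (γ t) →
        ∃ c : ℝ, fderiv ℝ F (γ t) (derivWithin γ (Set.Icc 0 1) t) =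
          c • derivWithin γ (Set.Icc 0 1) u := by
  intro t ht hto u hu huFt
  have hγc : ContinuousOn γ (Set.Icc 0 1) := hγC1.continuousOn
  set p : E2 := γ t with hp
  set A : E2 →L[ℝ] E2 := fderiv ℝ F p with hA
  set D : ℝ → E2 := derivWithin γ (Set.Icc 0 1) with hD
  -- derivatives of γ within the interval
  have hdiffγ : DifferentiableOn ℝ γ (Set.Icc 0 1) := hγC1.differentiableOn one_ne_zero
  have hdt : HasDerivWithinAt γ (D t) (Set.Icc 0 1) t := (hdiffγ t ht).hasDerivWithinAt
  have hdu : HasDerivWithinAt γ (D u) (Set.Icc 0 1) u := (hdiffγ u hu).hasDerivWithinAt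
  -- a sequence in O \ {p} converging to p
  obtain ⟨pn, hpnS, hpnlim⟩ := mem_closure_iff_seq_limit.mp (hacc p hto)
  -- parameters of pn
  have hpnO : ∀ n, pn n ∈ O := fun n => (hpnS n).1
  choose tn htn hγtn using fun n => hO (hpnO n)
  have htn_ne : ∀ n, tn n ≠ t := by
    intro n hne
    exact (hpnS n).2 (by simp [← hγtn n, hne, hp])
  have htnlim : Tendsto tn atTop (𝓝 t) := by
    refine param_tendsto γ hγinj hγc tn htn ht ?_
    simpa only [hγtn] using hpnlim
  have htnlim' : Tendsto tn atTop (𝓝[Set.Icc 0 1 \ {t}] t) := by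
    refine tendsto_nhdsWithin_of_tendsto_nhds_of_eventually_within _ htnlim ?_
    exact Eventually.of_forall fun n => ⟨htn n, htn_ne n⟩
  have hslope_t : Tendsto (fun n => slope γ t (tn n)) atTop (𝓝 (D t)) :=
    (hasDerivWithinAt_iff_tendsto_slope.mp hdt).comp htnlim'
  -- images under F and their parameters
  have hFpnO : ∀ n, F (pn n) ∈ O := fun n => hFO ⟨pn n, hpnO n, rfl⟩
  choose un hun hγun using fun n => hO (hFpnO n)
  have hFp : γ u = F p := huFt
  have hFcont : ContinuousAt F p := (hFdiff p hto).continuousAt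
  have hunlim : Tendsto un atTop (𝓝 u) := by
    refine param_tendsto γ hγinj hγc un hun hu ?_
    have : Tendsto (fun n => F (pn n)) atTop (𝓝 (F p)) := hFcont.tendsto.comp hpnlim
    rw [← hFp] at this
    simpa only [hγun] using this
  -- the rescaled difference sequence
  set cn : ℕ → ℝ := fun n => (tn n - t)⁻¹ with hcn
  set wn : ℕ → E2 := fun n => cn n • (γ (un n) - γ u) with hwn
  -- wn converges to A (D t)
  have hFd : HasFDerivAt F A p := (hFdiff p hto).hasFDerivAt
  have hlo : (fun q => F q - F p - A (q - p)) =o[𝓝 p] fun q => q - p := hFd.isLittleO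
  have hlo' : (fun n => F (pn n) - F p - A (pn n - p)) =o[atTop] fun n => pn n - p :=
    hlo.comp_tendsto hpnlim
  have hsl_eq : ∀ n, cn n • (pn n - p) = slope γ t (tn n) := by
    intro n
    simp [slope, cn, hγtn n, hp, vsub_eq_sub]
  have hbig : (fun n => cn n • (pn n - p)) =O[atTop] (fun _ : ℕ => (1:ℝ)) := by
    have h : Tendsto (fun n => cn n • (pn n - p)) atTop (𝓝 (D t)) := by
      simpa only [hsl_eq] using hslope_t
    exact h.isBigO_one ℝ
  have hmain0 : Tendsto (fun n => cn n • (F (pn n) - F p - A (pn n - p))) atTop (𝓝 0) := by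
    rw [← isLittleO_one_iff ℝ]
    calc (fun n => cn n • (F (pn n) - F p - A (pn n - p)))
        =o[atTop] fun n => cn n • (pn n - p) := (isBigO_refl cn atTop).smul_isLittleO hlo'
      _ =O[atTop] fun _ => (1:ℝ) := hbig
  have hAcont : Tendsto (fun n => A (slope γ t (tn n))) atTop (𝓝 (A (D t))) :=
    (A.continuous.tendsto _).comp hslope_t
  have hwlim : Tendsto wn atTop (𝓝 (A (D t))) := by
    have hsum := hmain0.add hAcont
    rw [zero_add] at hsum
    refine hsum.congr fun n => ?_
    rw [← hsl_eq n, A.map_smul]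
    show cn n • (F (pn n) - F p - A (pn n - p)) + cn n • A (pn n - p)
        = cn n • (γ (un n) - γ u)
    rw [hγun n, hFp]
    module
  set w : E2 := A (D t) with hw
  -- the ratio sequence
  set vn : ℕ → ℝ := fun n => cn n * (un n - u) with hvn
  have hkey : ∀ n, wn n = vn n • slope γ u (un n) := by
    intro n
    by_cases h : un n = u
    · simp [wn, vn, h, slope]
    · have hne : un n - u ≠ 0 := sub_ne_zero.2 h
      rw [hwn, hvn]
      simp only [slope, vsub_eq_sub, smul_smul]
      congr 1
      field_simp
  -- eventual bound on vn
  have hDu : ‖D u‖ > 0 := norm_pos_iff.mpr (hγreg u hu)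
  set δ : ℝ := ‖D u‖ / 2 with hδ
  have hδpos : 0 < δ := by positivity
  have hslope_u : Tendsto (fun s => slope γ u s) (𝓝[Set.Icc 0 1 \ {u}] u) (𝓝 (D u)) :=
    hasDerivWithinAt_iff_tendsto_slope.mp hdu
  have hev1 : ∀ᶠ s in 𝓝[Set.Icc 0 1 \ {u}] u, δ < ‖slope γ u s‖ := by
    have : Tendsto (fun s => ‖slope γ u s‖) (𝓝[Set.Icc 0 1 \ {u}] u) (𝓝 ‖D u‖) :=
      hslope_u.norm
    exact this.eventually (eventually_gt_nhds (by rw [hδ]; linarith))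
  rw [eventually_nhdsWithin_iff] at hev1
  have hev2 : ∀ᶠ n in atTop, un n ∈ Set.Icc (0:ℝ) 1 \ {u} → δ < ‖slope γ u (un n)‖ :=
    hunlim.eventually hev1
  have hev3 : ∀ᶠ n in atTop, ‖wn n‖ < ‖w‖ + 1 :=
    hwlim.norm.eventually (eventually_lt_nhds (lt_add_one ‖w‖))
  set M : ℝ := (‖w‖ + 1) / δ with hM
  have hevM : ∀ᶠ n in atTop, vn n ∈ Set.Icc (-M) M := by
    filter_upwards [hev2, hev3] with n h2 h3
    have hM0 : 0 ≤ M := by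
      have : 0 ≤ ‖w‖ + 1 := by positivity
      exact div_nonneg this hδpos.le
    by_cases h : un n = u
    · have : vn n = 0 := by simp [vn, h]
      rw [this]
      constructor <;> linarith
    · have hsl := h2 ⟨hun n, h⟩
      have hnorm : ‖wn n‖ = |vn n| * ‖slope γ u (un n)‖ := by
        rw [hkey n, norm_smul, Real.norm_eq_abs]
      have hbound : |vn n| ≤ M := by
        by_contra hc
        push_neg at hc
        have h1 : M * δ < |vn n| * ‖slope γ u (un n)‖ := by
          calc M * δ < |vn n| * δ := by
                exact mul_lt_mul_of_pos_right hc hδpos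
            _ ≤ |vn n| * ‖slope γ u (un n)‖ :=
                mul_le_mul_of_nonneg_left hsl.le (abs_nonneg _)
        have h2' : M * δ = ‖w‖ + 1 := by
          rw [hM]; field_simp
        rw [h2', ← hnorm] at h1
        linarith
      exact abs_le.mp hbound
  -- extract a convergent subsequence of vn
  obtain ⟨c, -, φ, hφ, hvφ⟩ :=
    tendsto_subseq_of_frequently_bounded (Metric.isBounded_Icc (-M) M) hevM.frequently
  have hwφ : Tendsto (fun n => wn (φ n)) atTop (𝓝 w) := hwlim.comp hφ.tendsto_atTop
  by_cases hcase : ∀ᶠ n in atTop, un (φ n) ≠ u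
  · -- generic case: the slopes at u converge to D u
    have huφ : Tendsto (fun n => un (φ n)) atTop (𝓝[Set.Icc 0 1 \ {u}] u) := by
      rw [tendsto_nhdsWithin_iff]
      exact ⟨hunlim.comp hφ.tendsto_atTop,
        hcase.mono fun n hn => ⟨hun _, hn⟩⟩
    have hslφ : Tendsto (fun n => slope γ u (un (φ n))) atTop (𝓝 (D u)) :=
      hslope_u.comp huφ
    have hprod : Tendsto (fun n => vn (φ n) • slope γ u (un (φ n))) atTop (𝓝 (c • D u)) :=
      hvφ.smul hslφ
    have : w = c • D u := by
      refine tendsto_nhds_unique ?_ hprod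
      exact hwφ.congr fun n => hkey (φ n)
    exact ⟨c, this⟩
  · -- degenerate case: un (φ n) = u frequently, whence w = 0
    rw [not_eventually] at hcase
    push_neg at hcase
    have hfreq : ∃ᶠ n in atTop, wn (φ n) = 0 := by
      refine hcase.mono fun n hn => ?_
      simp [wn, hn]
    have hw0 : w = 0 :=
      tendsto_nhds_unique_of_frequently_eq hwφ tendsto_const_nhds hfreq
    exact ⟨0, by rw [hw0, zero_smul]⟩

end
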